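/- arXiv:2602.16208 — 3 statements merged into one kernel-verified Lean document; each statement's English description precedes it below -/
import Mathlib

section
/- If f belongs to the class S*_B, then the second-order Toeplitz determinant of the logarithmic coefficients of its inverse satisfies |Γ_1² − Γ_2²| ≤ 25/64; equivalently, |9·a_2⁴ − 4·a_2² + 4·a_3² − 12·a_2²·a_3| ≤ 25/4, where Γ_1 = −a_2/2 and Γ_2 = −(a_3 − (3/2)a_2²)/2. -/
open Complex Metric

/-- The `n`-th Taylor coefficient of `f` at `0`. -/
noncomputable def taylorCoeff (f : ℂ → ℂ) (n : ℕ) : ℂ :=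
  iteratedDeriv n f 0 / n.factorial

/-- Membership in the class `S*_B`: `f` is analytic on the unit disk, normalized by
`f(0) = 0` and `f'(0) = 1`, and there is a Schwarz function `w` with
`z f'(z) (1 - log(1 + w z)) = f z` on the unit disk. -/
def IsSB (f : ℂ → ℂ) : Prop :=
  DifferentiableOn ℂ f (ball (0:ℂ) 1) ∧ f 0 = 0 ∧ deriv f 0 = 1 ∧
  ∃ w : ℂ → ℂ, DifferentiableOn ℂ w (ball (0:ℂ) 1) ∧ w 0 = 0 ∧
    (∀ z ∈ ball (0:ℂ) 1, ‖w z‖ < 1) ∧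
    (∀ z ∈ ball (0:ℂ) 1, z * deriv f z * (1 - Complex.log (1 + w z)) = f z)

lemma mobius_ne (c ζ : ℂ) (hc : ‖c‖ < 1) (hζ : ‖ζ‖ < 1) :
    (1 : ℂ) - (starRingEnd ℂ) c * ζ ≠ 0 := by
  intro h
  have h1 : (1 : ℂ) = (starRingEnd ℂ) c * ζ := by linear_combination h
  have h2 : ‖(starRingEnd ℂ) c * ζ‖ < 1 := by
    rw [norm_mul, Complex.norm_conj]
    calc ‖c‖ * ‖ζ‖ ≤ 1 * ‖ζ‖ := by
          exact mul_le_mul_of_nonneg_right hc.le (norm_nonneg _)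
      _ < 1 := by simpa using hζ
  rw [← h1] at h2; simp at h2

lemma mobius_lt (c ζ : ℂ) (hc : ‖c‖ < 1) (hζ : ‖ζ‖ < 1) :
    ‖(ζ - c) / (1 - (starRingEnd ℂ) c * ζ)‖ < 1 := by
  have hne := mobius_ne c ζ hc hζ
  have hpos : 0 < ‖1 - (starRingEnd ℂ) c * ζ‖ := by
    simpa [norm_pos_iff] using hne
  rw [norm_div, div_lt_one hpos]
  have hsq : Complex.normSq (ζ - c) < Complex.normSq (1 - (starRingEnd ℂ) c * ζ) := by
    have e : Complex.normSq (1 - (starRingEnd ℂ) c * ζ) - Complex.normSq (ζ - c)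
        = (1 - Complex.normSq c) * (1 - Complex.normSq ζ) := by
      simp only [Complex.normSq_apply, Complex.sub_re, Complex.sub_im, Complex.mul_re,
        Complex.mul_im, Complex.one_re, Complex.one_im, Complex.conj_re, Complex.conj_im]
      ring
    have h1 : Complex.normSq c < 1 := by
      rw [Complex.normSq_eq_norm_sq]; nlinarith [norm_nonneg c]
    have h2 : Complex.normSq ζ < 1 := by
      rw [Complex.normSq_eq_norm_sq]; nlinarith [norm_nonneg ζ]
    nlinarith
  rw [Complex.normSq_eq_norm_sq, Complex.normSq_eq_norm_sq] at hsq
  nlinarith [norm_nonneg (ζ - c)]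

lemma schwarz_pick_zero (v : ℂ → ℂ) (hd : DifferentiableOn ℂ v (ball (0:ℂ) 1))
    (hb : ∀ z ∈ ball (0:ℂ) 1, ‖v z‖ ≤ 1) :
    ‖deriv v 0‖ ≤ 1 - ‖v 0‖ ^ 2 := by
  by_cases hlt : ∀ z ∈ ball (0:ℂ) 1, ‖v z‖ < 1
  · have hc : ‖v 0‖ < 1 := hlt 0 (mem_ball_self one_pos)
    set c := v 0 with hcdef
    set h : ℂ → ℂ := fun z => (v z - c) / (1 - (starRingEnd ℂ) c * v z) with hh
    have hdenne : ∀ z ∈ ball (0:ℂ) 1, (1:ℂ) - (starRingEnd ℂ) c * v z ≠ 0 :=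
      fun z hz => mobius_ne c (v z) hc (hlt z hz)
    have hdh : DifferentiableOn ℂ h (ball (0:ℂ) 1) := by
      apply DifferentiableOn.div
      · exact hd.sub (differentiableOn_const c)
      · exact (differentiableOn_const (1:ℂ)).sub ((differentiableOn_const _).mul hd)
      · exact hdenne
    have h0 : h 0 = 0 := by simp [hh, ← hcdef]
    have hmaps : Set.MapsTo h (ball (0:ℂ) 1) (ball (0:ℂ) 1) := by
      intro z hz
      rw [mem_ball_zero_iff]
      exact mobius_lt c (v z) hc (hlt z hz)
    have hsch : ‖deriv h 0‖ ≤ 1 :=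
      Complex.norm_deriv_le_one_of_mapsTo_ball hdh
        (by rw [h0]; exact hmaps.mono_right ball_subset_closedBall) one_pos
    have hv0 : HasDerivAt v (deriv v 0) 0 :=
      (hd.differentiableAt (isOpen_ball.mem_nhds (mem_ball_self one_pos))).hasDerivAt
    have hden0 : (1:ℂ) - (starRingEnd ℂ) c * c ≠ 0 := mobius_ne c c hc hc
    have hdh0 : HasDerivAt h
        ((deriv v 0 * (1 - (starRingEnd ℂ) c * c) - (v 0 - c) * (0 - (starRingEnd ℂ) c * deriv v 0))
          / (1 - (starRingEnd ℂ) c * c) ^ 2) 0 := by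
      have hnum : HasDerivAt (fun z => v z - c) (deriv v 0) 0 := hv0.sub_const c
      have hdenom : HasDerivAt (fun z => (1:ℂ) - (starRingEnd ℂ) c * v z)
          (0 - (starRingEnd ℂ) c * deriv v 0) 0 :=
        (hasDerivAt_const 0 (1:ℂ)).sub ((hv0.const_mul _))
      exact hnum.div hdenom hden0
    have hderivh : deriv h 0 = deriv v 0 / (1 - (starRingEnd ℂ) c * c) := by
      rw [hdh0.deriv, ← hcdef]
      field_simp
      ring
    have habs1 : (1:ℂ) - (starRingEnd ℂ) c * c = ((1 - Complex.normSq c : ℝ) : ℂ) := by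
      rw [← Complex.normSq_eq_conj_mul_self]; push_cast; ring
    have hpos : (0:ℝ) < 1 - Complex.normSq c := by
      rw [Complex.normSq_eq_norm_sq]; nlinarith [norm_nonneg c]
    rw [hderivh, norm_div, habs1, Complex.norm_of_nonneg hpos.le, div_le_one hpos] at hsch
    rw [← Complex.normSq_eq_norm_sq]
    exact hsch
  · push_neg at hlt
    obtain ⟨z0, hz0, hge⟩ := hlt
    have heq1 : ‖v z0‖ = 1 := le_antisymm (hb z0 hz0) hge
    have hmax : IsMaxOn (norm ∘ v) (ball (0:ℂ) 1) z0 := by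
      intro z hz
      simp only [Function.comp, Set.mem_setOf_eq, heq1]
      exact hb z hz
    have hconst := Complex.eqOn_of_isPreconnected_of_isMaxOn_norm
      (convex_ball (0:ℂ) 1).isPreconnected isOpen_ball hd hz0 hmax
    have hev : v =ᶠ[nhds (0:ℂ)] Function.const ℂ (v z0) :=
      hconst.eventuallyEq_of_mem (isOpen_ball.mem_nhds (mem_ball_self one_pos))
    have : deriv v 0 = 0 := by rw [hev.deriv_eq]; exact deriv_const 0 (v z0)
    rw [this, norm_zero]
    have : v 0 = v z0 := hconst (mem_ball_self one_pos)
    rw [this, heq1]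
    norm_num


lemma coeff_eqs (f w : ℂ → ℂ)
    (hfd : DifferentiableOn ℂ f (ball (0:ℂ) 1)) (hf1 : deriv f 0 = 1)
    (hwd : DifferentiableOn ℂ w (ball (0:ℂ) 1)) (hw0 : w 0 = 0)
    (hwb : ∀ z ∈ ball (0:ℂ) 1, ‖w z‖ < 1)
    (heq : ∀ z ∈ ball (0:ℂ) 1, z * deriv f z * (1 - Complex.log (1 + w z)) = f z) :
    deriv (deriv f) 0 = 2 * deriv w 0 ∧
    2 * deriv (deriv (deriv f)) 0 = 9 * (deriv w 0) ^ 2 + 3 * deriv (deriv w) 0 := by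
  have hfa : AnalyticOnNhd ℂ f (ball (0:ℂ) 1) := hfd.analyticOnNhd isOpen_ball
  have hfa1 : AnalyticOnNhd ℂ (deriv f) (ball (0:ℂ) 1) := hfa.deriv
  have hfa2 : AnalyticOnNhd ℂ (deriv (deriv f)) (ball (0:ℂ) 1) := hfa1.deriv
  have hfa3 : AnalyticOnNhd ℂ (deriv (deriv (deriv f))) (ball (0:ℂ) 1) := hfa2.deriv
  have hwa : AnalyticOnNhd ℂ w (ball (0:ℂ) 1) := hwd.analyticOnNhd isOpen_ball
  have hwa1 : AnalyticOnNhd ℂ (deriv w) (ball (0:ℂ) 1) := hwa.deriv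
  have hwa2 : AnalyticOnNhd ℂ (deriv (deriv w)) (ball (0:ℂ) 1) := hwa1.deriv
  -- basic facts at points of the ball
  have hslit : ∀ z ∈ ball (0:ℂ) 1, (1 + w z) ∈ Complex.slitPlane := by
    intro z hz
    left
    have h1 : |(w z).re| ≤ ‖w z‖ := Complex.abs_re_le_norm _
    have h2 := hwb z hz
    have : -1 < (w z).re := by cases abs_le.mp h1 with | intro a b => linarith
    simpa using by linarith
  have hne : ∀ z ∈ ball (0:ℂ) 1, (1 + w z) ≠ 0 := fun z hz =>
    Complex.slitPlane_ne_zero (hslit z hz)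
  -- HasDerivAt facts
  have hwz : ∀ z ∈ ball (0:ℂ) 1, HasDerivAt w (deriv w z) z := fun z hz =>
    (hwa z hz).differentiableAt.hasDerivAt
  have hw1z : ∀ z ∈ ball (0:ℂ) 1, HasDerivAt (deriv w) (deriv (deriv w) z) z := fun z hz =>
    (hwa1 z hz).differentiableAt.hasDerivAt
  have hw2z : ∀ z ∈ ball (0:ℂ) 1, HasDerivAt (deriv (deriv w)) (deriv (deriv (deriv w)) z) z :=
    fun z hz => (hwa2 z hz).differentiableAt.hasDerivAt
  have hf1z : ∀ z ∈ ball (0:ℂ) 1, HasDerivAt (deriv f) (deriv (deriv f) z) z := fun z hz =>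
    (hfa1 z hz).differentiableAt.hasDerivAt
  have hf2z : ∀ z ∈ ball (0:ℂ) 1, HasDerivAt (deriv (deriv f)) (deriv (deriv (deriv f)) z) z :=
    fun z hz => (hfa2 z hz).differentiableAt.hasDerivAt
  have hf3z : ∀ z ∈ ball (0:ℂ) 1,
      HasDerivAt (deriv (deriv (deriv f))) (deriv (deriv (deriv (deriv f))) z) z :=
    fun z hz => (hfa3 z hz).differentiableAt.hasDerivAt
  have hLz : ∀ z ∈ ball (0:ℂ) 1,
      HasDerivAt (fun z => Complex.log (1 + w z)) (deriv w z / (1 + w z)) z := by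
    intro z hz
    have H := HasDerivAt.clog ((hasDerivAt_const z (1:ℂ)).fun_add (hwz z hz)) (hslit z hz)
    convert H using 1
    ring
  have hMz : ∀ z ∈ ball (0:ℂ) 1,
      HasDerivAt (fun z => deriv w z / (1 + w z))
        ((deriv (deriv w) z * (1 + w z) - deriv w z * deriv w z) / (1 + w z) ^ 2) z := by
    intro z hz
    have H := (hw1z z hz).fun_div ((hasDerivAt_const z (1:ℂ)).fun_add (hwz z hz)) (hne z hz)
    refine H.congr_deriv ?_
    ring
  -- Step 1
  have hG : ∀ z ∈ ball (0:ℂ) 1,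
      HasDerivAt (fun z => z * deriv f z * (1 - Complex.log (1 + w z)))
        (deriv f z * (1 - Complex.log (1 + w z)) + z * deriv (deriv f) z * (1 - Complex.log (1 + w z))
          - z * deriv f z * (deriv w z / (1 + w z))) z := by
    intro z hz
    have H := ((hasDerivAt_id z).fun_mul (hf1z z hz)).fun_mul
      ((hasDerivAt_const z (1:ℂ)).fun_sub (hLz z hz))
    refine H.congr_deriv ?_
    simp only [id_eq]
    ring
  have hE1 : ∀ z ∈ ball (0:ℂ) 1,
      deriv f z = deriv f z * (1 - Complex.log (1 + w z))
        + z * deriv (deriv f) z * (1 - Complex.log (1 + w z))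
        - z * deriv f z * (deriv w z / (1 + w z)) := by
    intro z hz
    have hev : f =ᶠ[nhds z] (fun z => z * deriv f z * (1 - Complex.log (1 + w z))) :=
      Filter.eventuallyEq_of_mem (isOpen_ball.mem_nhds hz) (fun y hy => (heq y hy).symm)
    exact ((hG z hz).congr_of_eventuallyEq hev).deriv
  -- Step 2
  set F2 : ℂ → ℂ := fun z =>
      (deriv (deriv f) z * (1 - Complex.log (1 + w z)) - deriv f z * (deriv w z / (1 + w z)))
      + ((deriv (deriv f) z + z * deriv (deriv (deriv f)) z) * (1 - Complex.log (1 + w z))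
          - z * deriv (deriv f) z * (deriv w z / (1 + w z)))
      - ((deriv f z + z * deriv (deriv f) z) * (deriv w z / (1 + w z))
          + z * deriv f z * ((deriv (deriv w) z * (1 + w z) - deriv w z * deriv w z) / (1 + w z) ^ 2))
    with hF2def
  have hG2 : ∀ z ∈ ball (0:ℂ) 1,
      HasDerivAt (fun z => deriv f z * (1 - Complex.log (1 + w z))
        + z * deriv (deriv f) z * (1 - Complex.log (1 + w z))
        - z * deriv f z * (deriv w z / (1 + w z))) (F2 z) z := by
    intro z hz
    have h1L := (hasDerivAt_const z (1:ℂ)).fun_sub (hLz z hz)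
    have H := (((hf1z z hz).fun_mul h1L).fun_add
        (((hasDerivAt_id z).fun_mul (hf2z z hz)).fun_mul h1L)).fun_sub
      (((hasDerivAt_id z).fun_mul (hf1z z hz)).fun_mul (hMz z hz))
    refine H.congr_deriv ?_
    rw [hF2def]
    simp only [id_eq]
    ring
  have hE2 : ∀ z ∈ ball (0:ℂ) 1, deriv (deriv f) z = F2 z := by
    intro z hz
    have hev : deriv f =ᶠ[nhds z] (fun z => deriv f z * (1 - Complex.log (1 + w z))
        + z * deriv (deriv f) z * (1 - Complex.log (1 + w z))
        - z * deriv f z * (deriv w z / (1 + w z))) :=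
      Filter.eventuallyEq_of_mem (isOpen_ball.mem_nhds hz) (fun y hy => hE1 y hy)
    exact ((hG2 z hz).congr_of_eventuallyEq hev).deriv
  -- evaluate step 2 at 0
  have h0mem : (0:ℂ) ∈ ball (0:ℂ) 1 := mem_ball_self one_pos
  have hc2' : deriv (deriv f) 0 = 2 * deriv w 0 := by
    have h := hE2 0 h0mem
    rw [hF2def] at h
    simp only [hw0, hf1, add_zero, Complex.log_one, sub_zero, mul_one, mul_zero, zero_mul,
      zero_add, one_mul, div_one, zero_div, one_pow] at h
    linear_combination -h
  -- step 3: differentiate F2 at 0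
  have h1L0 := (hasDerivAt_const (0:ℂ) (1:ℂ)).fun_sub (hLz 0 h0mem)
  have hM0 := hMz 0 h0mem
  have hN0 := (((hw2z 0 h0mem).fun_mul ((hasDerivAt_const (0:ℂ) (1:ℂ)).fun_add (hwz 0 h0mem))).fun_sub
      ((hw1z 0 h0mem).fun_mul (hw1z 0 h0mem))).fun_div
    (((hasDerivAt_const (0:ℂ) (1:ℂ)).fun_add (hwz 0 h0mem)).fun_pow 2)
    (pow_ne_zero 2 (hne 0 h0mem))
  have HA := ((hf2z 0 h0mem).fun_mul h1L0).fun_sub ((hf1z 0 h0mem).fun_mul hM0)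
  have HB := (((hf2z 0 h0mem).fun_add ((hasDerivAt_id (0:ℂ)).fun_mul (hf3z 0 h0mem))).fun_mul h1L0).fun_sub
    (((hasDerivAt_id (0:ℂ)).fun_mul (hf2z 0 h0mem)).fun_mul hM0)
  have HC := (((hf1z 0 h0mem).fun_add ((hasDerivAt_id (0:ℂ)).fun_mul (hf2z 0 h0mem))).fun_mul hM0).fun_add
    (((hasDerivAt_id (0:ℂ)).fun_mul (hf1z 0 h0mem)).fun_mul hN0)
  have H3 := (HA.add HB).fun_sub HC
  have hev3 : deriv (deriv f) =ᶠ[nhds (0:ℂ)] F2 :=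
    Filter.eventuallyEq_of_mem (isOpen_ball.mem_nhds h0mem) hE2
  rw [hF2def] at hev3
  have h3 := (H3.congr_of_eventuallyEq hev3).deriv
  simp only [hw0, hf1, id_eq, add_zero, Complex.log_one, sub_zero, mul_one, mul_zero, zero_mul,
    zero_add, one_mul, div_one, zero_div, one_pow] at h3
  refine ⟨hc2', ?_⟩
  linear_combination (-1 : ℂ) * h3 + 6 * deriv w 0 * hc2'

theorem toeplitz_log_coeff_inverse (f : ℂ → ℂ) (hf : IsSB f) :
    ‖(-(taylorCoeff f 2) / 2) ^ 2 -
        (-(taylorCoeff f 3 - (3 / 2) * (taylorCoeff f 2) ^ 2) / 2) ^ 2‖ ≤ 25 / 64 ∧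
    ‖9 * (taylorCoeff f 2) ^ 4 - 4 * (taylorCoeff f 2) ^ 2 +
        4 * (taylorCoeff f 3) ^ 2 - 12 * (taylorCoeff f 2) ^ 2 * taylorCoeff f 3‖ ≤ 25 / 4 := by
  obtain ⟨hfd, hf0, hf1, w, hwd, hw0, hwb, heq⟩ := hf
  have h0mem : (0:ℂ) ∈ ball (0:ℂ) 1 := mem_ball_self one_pos
  obtain ⟨hc2, hc3⟩ := coeff_eqs f w hfd hf1 hwd hw0 hwb heq
  -- the dslope function v
  set v : ℂ → ℂ := dslope w 0 with hvdef
  have hvd : DifferentiableOn ℂ v (ball (0:ℂ) 1) :=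
    (differentiableOn_dslope (isOpen_ball.mem_nhds h0mem)).mpr hwd
  have hmaps : Set.MapsTo w (ball (0:ℂ) 1) (ball (w 0) 1) := by
    intro z hz
    rw [hw0, mem_ball_zero_iff]
    exact hwb z hz
  have hvb : ∀ z ∈ ball (0:ℂ) 1, ‖v z‖ ≤ 1 := by
    intro z hz
    have := Complex.norm_dslope_le_div_of_mapsTo_ball hwd (hmaps.mono_right ball_subset_closedBall) hz
    simpa using this
  have hv0 : v 0 = deriv w 0 := dslope_same w 0
  -- c1, c2 and their bounds
  have hpick : ‖deriv v 0‖ ≤ 1 - ‖v 0‖ ^ 2 :=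
    schwarz_pick_zero v hvd hvb
  have hx1 : ‖deriv w 0‖ ≤ 1 := by
    have := hvb 0 h0mem
    rw [hv0] at this
    exact this
  -- second derivative of w via v
  have hwv : ∀ z : ℂ, w z = z * v z := by
    intro z
    have := sub_smul_dslope w 0 z
    simp only [sub_zero, smul_eq_mul, hw0] at this
    rw [hvdef, this]
  have hva : AnalyticOnNhd ℂ v (ball (0:ℂ) 1) := hvd.analyticOnNhd isOpen_ball
  have hva1 : AnalyticOnNhd ℂ (deriv v) (ball (0:ℂ) 1) := hva.deriv
  have hderw : ∀ z ∈ ball (0:ℂ) 1, deriv w z = 1 * v z + z * deriv v z := by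
    intro z hz
    have hvz : HasDerivAt v (deriv v z) z := (hva z hz).differentiableAt.hasDerivAt
    have H : HasDerivAt (fun z => z * v z) (1 * v z + z * deriv v z) z := by
      have := (hasDerivAt_id z).fun_mul hvz
      refine this.congr_deriv ?_
      all_goals simp only [id_eq]
    have hfun : w = fun z => z * v z := funext hwv
    rw [hfun]
    exact H.deriv
  have hw2v : deriv (deriv w) 0 = 2 * deriv v 0 := by
    have hv1z : HasDerivAt (deriv v) (deriv (deriv v) 0) 0 :=
      (hva1 0 h0mem).differentiableAt.hasDerivAt
    have hv0z : HasDerivAt v (deriv v 0) 0 := (hva 0 h0mem).differentiableAt.hasDerivAt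
    have H : HasDerivAt (fun z => 1 * v z + z * deriv v z)
        (1 * deriv v 0 + (1 * deriv v 0 + 0 * deriv (deriv v) 0)) 0 := by
      have := (hv0z.const_mul (1:ℂ)).fun_add ((hasDerivAt_id (0:ℂ)).fun_mul hv1z)
      refine this.congr_deriv ?_
      all_goals simp only [id_eq]
    have hev : deriv w =ᶠ[nhds (0:ℂ)] (fun z => 1 * v z + z * deriv v z) :=
      Filter.eventuallyEq_of_mem (isOpen_ball.mem_nhds h0mem) hderw
    have := (H.congr_of_eventuallyEq hev).deriv
    rw [this]
    ring
  -- Taylor coefficients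
  have ha2 : taylorCoeff f 2 = deriv w 0 := by
    have h2 : iteratedDeriv 2 f = deriv (deriv f) := by
      rw [iteratedDeriv_succ, iteratedDeriv_one]
    rw [taylorCoeff, h2, hc2]
    norm_num [Nat.factorial]
  have ha3 : 12 * taylorCoeff f 3 = 9 * (deriv w 0) ^ 2 + 6 * deriv v 0 := by
    have h3 : iteratedDeriv 3 f = deriv (deriv (deriv f)) := by
      rw [iteratedDeriv_succ, iteratedDeriv_succ, iteratedDeriv_one]
    rw [taylorCoeff, h3]
    rw [hw2v] at hc3
    have : (((3:ℕ).factorial : ℂ)) = 6 := by norm_num [Nat.factorial]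
    rw [this]
    field_simp
    linear_combination 6 * hc3
  -- abbreviations
  set c1 := deriv w 0
  set c2 := deriv v 0
  set x := ‖c1‖ with hxdef
  set y := ‖c2‖ with hydef
  have hy1 : y ≤ 1 - x ^ 2 := by rw [hydef, hxdef, ← hv0]; exact hpick
  have hx0 : 0 ≤ x := norm_nonneg _
  have hy0 : 0 ≤ y := norm_nonneg _
  -- main expression
  have hEeq : 4 * (9 * (taylorCoeff f 2) ^ 4 - 4 * (taylorCoeff f 2) ^ 2 +
      4 * (taylorCoeff f 3) ^ 2 - 12 * (taylorCoeff f 2) ^ 2 * taylorCoeff f 3)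
      = 9 * c1 ^ 4 + (-16) * c1 ^ 2 + (-12) * (c1 ^ 2 * c2) + 4 * c2 ^ 2 := by
    rw [ha2]
    linear_combination (4 * taylorCoeff f 3 / 3 - 3 * c1 ^ 2 + 2 * c2 / 3) * ha3
  -- bound |4E| ≤ 25
  have htri : ‖4 * (9 * (taylorCoeff f 2) ^ 4 - 4 * (taylorCoeff f 2) ^ 2 +
      4 * (taylorCoeff f 3) ^ 2 - 12 * (taylorCoeff f 2) ^ 2 * taylorCoeff f 3)‖
      ≤ 9 * x ^ 4 + 16 * x ^ 2 + 12 * (x ^ 2 * y) + 4 * y ^ 2 := by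
    rw [hEeq]
    calc ‖9 * c1 ^ 4 + (-16) * c1 ^ 2 + (-12) * (c1 ^ 2 * c2) + 4 * c2 ^ 2‖
        ≤ ‖9 * c1 ^ 4 + (-16) * c1 ^ 2 + (-12) * (c1 ^ 2 * c2)‖
            + ‖4 * c2 ^ 2‖ := norm_add_le _ _
      _ ≤ ‖9 * c1 ^ 4 + (-16) * c1 ^ 2‖ + ‖(-12) * (c1 ^ 2 * c2)‖
            + ‖4 * c2 ^ 2‖ := by
          gcongr
          exact norm_add_le _ _
      _ ≤ ‖9 * c1 ^ 4‖ + ‖(-16) * c1 ^ 2‖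
            + ‖(-12) * (c1 ^ 2 * c2)‖ + ‖4 * c2 ^ 2‖ := by
          gcongr
          exact norm_add_le _ _
      _ = 9 * x ^ 4 + 16 * x ^ 2 + 12 * (x ^ 2 * y) + 4 * y ^ 2 := by
          simp only [norm_mul, norm_pow, norm_neg]
          norm_num [hxdef, hydef]
  have hnum : 9 * x ^ 4 + 16 * x ^ 2 + 12 * (x ^ 2 * y) + 4 * y ^ 2 ≤ 25 := by
    nlinarith [sq_nonneg x, sq_nonneg y, mul_nonneg (mul_nonneg hx0 hx0) (sub_nonneg.mpr hy1),
      sq_nonneg (1 - x ^ 2), mul_nonneg hy0 (sub_nonneg.mpr hy1),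
      mul_nonneg (sub_nonneg.mpr hx1) hx0]
  have hmain : ‖9 * (taylorCoeff f 2) ^ 4 - 4 * (taylorCoeff f 2) ^ 2 +
      4 * (taylorCoeff f 3) ^ 2 - 12 * (taylorCoeff f 2) ^ 2 * taylorCoeff f 3‖ ≤ 25 / 4 := by
    have h4 : ‖4 * (9 * (taylorCoeff f 2) ^ 4 - 4 * (taylorCoeff f 2) ^ 2 +
        4 * (taylorCoeff f 3) ^ 2 - 12 * (taylorCoeff f 2) ^ 2 * taylorCoeff f 3)‖ ≤ 25 :=
      htri.trans hnum
    rw [norm_mul] at h4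
    have h4' : ‖(4:ℂ)‖ = 4 := by norm_num
    rw [h4'] at h4
    linarith
  refine ⟨?_, hmain⟩
  have hgid : ((-(taylorCoeff f 2) / 2) ^ 2 -
      (-(taylorCoeff f 3 - (3 / 2) * (taylorCoeff f 2) ^ 2) / 2) ^ 2)
      = -(9 * (taylorCoeff f 2) ^ 4 - 4 * (taylorCoeff f 2) ^ 2 +
        4 * (taylorCoeff f 3) ^ 2 - 12 * (taylorCoeff f 2) ^ 2 * taylorCoeff f 3) / 16 := by
    ring
  rw [hgid, norm_div, norm_neg]
  have h16 : ‖(16:ℂ)‖ = 16 := by norm_num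
  rw [h16]
  linarith
end

section
/- If f belongs to the class S*_B with associated Schwarz function w having Taylor coefficients w(z) = Σ_{n≥1} b_n z^n, then the Taylor coefficients of f satisfy a_2 = b_1, a_3 = (3/4)·b_1² + (1/2)·b_2, and a_4 = (19/36)·b_1³ + (5/6)·b_1·b_2 + (1/3)·b_3. -/
open Complex Metric

/-- Auxiliary function: the derivative of `log (1 + w z)` is `deriv w z / (1 + w z)`, and
its second derivative is `L2aux w`. -/
noncomputable def L2aux (w : ℂ → ℂ) (z : ℂ) : ℂ :=
  (deriv (deriv w) z * (1 + w z) - deriv w z * deriv w z) / (1 + w z) ^ 2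

theorem coeff_in_terms_of_schwarz (f w : ℂ → ℂ)
    (hf : DifferentiableOn ℂ f (ball (0:ℂ) 1)) (hf0 : f 0 = 0) (hf1 : deriv f 0 = 1)
    (hw : DifferentiableOn ℂ w (ball (0:ℂ) 1)) (hw0 : w 0 = 0)
    (hwb : ∀ z ∈ ball (0:ℂ) 1, ‖w z‖ < 1)
    (heq : ∀ z ∈ ball (0:ℂ) 1, z * deriv f z * (1 - Complex.log (1 + w z)) = f z) :
    taylorCoeff f 2 = taylorCoeff w 1 ∧
    taylorCoeff f 3 = (3 / 4) * (taylorCoeff w 1) ^ 2 + (1 / 2) * taylorCoeff w 2 ∧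
    taylorCoeff f 4 = (19 / 36) * (taylorCoeff w 1) ^ 3 +
      (5 / 6) * taylorCoeff w 1 * taylorCoeff w 2 + (1 / 3) * taylorCoeff w 3 := by
  have hop : IsOpen (ball (0:ℂ) 1) := isOpen_ball
  have h0 : (0:ℂ) ∈ ball (0:ℂ) 1 := by simp
  have hfa : AnalyticOnNhd ℂ f (ball 0 1) := hf.analyticOnNhd hop
  have hwa : AnalyticOnNhd ℂ w (ball 0 1) := hw.analyticOnNhd hop
  have hslit : ∀ z ∈ ball (0:ℂ) 1, (1 + w z) ∈ slitPlane := by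
    intro z hz
    refine Or.inl ?_
    have h2 : |(w z).re| ≤ ‖w z‖ := Complex.abs_re_le_norm _
    have h4 : |(w z).re| < 1 := lt_of_le_of_lt h2 (hwb z hz)
    have h5 := (abs_lt.mp h4).1
    simp only [Complex.add_re, Complex.one_re]
    linarith
  have hne : ∀ z ∈ ball (0:ℂ) 1, (1 + w z) ≠ 0 := fun z hz =>
    Complex.slitPlane_ne_zero (hslit z hz)
  have hF1a : AnalyticOnNhd ℂ (deriv f) (ball 0 1) := hfa.deriv
  have hF2a : AnalyticOnNhd ℂ (deriv (deriv f)) (ball 0 1) := hF1a.deriv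
  have hF3a : AnalyticOnNhd ℂ (deriv (deriv (deriv f))) (ball 0 1) := hF2a.deriv
  have hF4a : AnalyticOnNhd ℂ (deriv (deriv (deriv (deriv f)))) (ball 0 1) := hF3a.deriv
  have hw1a : AnalyticOnNhd ℂ (deriv w) (ball 0 1) := hwa.deriv
  have hw2a : AnalyticOnNhd ℂ (deriv (deriv w)) (ball 0 1) := hw1a.deriv
  have hw3a : AnalyticOnNhd ℂ (deriv (deriv (deriv w))) (ball 0 1) := hw2a.deriv
  have hQa : AnalyticOnNhd ℂ (L2aux w) (ball 0 1) := by
    intro z hz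
    exact (((hw2a z hz).mul (analyticAt_const.add (hwa z hz))).sub
      ((hw1a z hz).mul (hw1a z hz))).div
      ((analyticAt_const.add (hwa z hz)).pow 2) (pow_ne_zero 2 (hne z hz))
  have hQa' : AnalyticOnNhd ℂ (deriv (L2aux w)) (ball 0 1) := hQa.deriv
  have dAt : ∀ (g : ℂ → ℂ), AnalyticOnNhd ℂ g (ball 0 1) →
      ∀ z ∈ ball (0:ℂ) 1, HasDerivAt g (deriv g z) z := fun g hg z hz =>
    (hg z hz).differentiableAt.hasDerivAt
  -- basic HasDerivAt facts
  have hdM : ∀ z ∈ ball (0:ℂ) 1, HasDerivAt (fun y => 1 + w y) (deriv w z) z := fun z hz =>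
    (dAt w hwa z hz).const_add 1
  have hdL : ∀ z ∈ ball (0:ℂ) 1,
      HasDerivAt (fun y => Complex.log (1 + w y)) (deriv w z / (1 + w z)) z := fun z hz =>
    (hdM z hz).clog (hslit z hz)
  have hd1L : ∀ z ∈ ball (0:ℂ) 1,
      HasDerivAt (fun y => 1 - Complex.log (1 + w y)) (-(deriv w z / (1 + w z))) z := fun z hz =>
    (hdL z hz).const_sub 1
  have hdL1 : ∀ z ∈ ball (0:ℂ) 1,
      HasDerivAt (fun y => deriv w y / (1 + w y)) (L2aux w z) z := fun z hz =>
    (dAt _ hw1a z hz).div (hdM z hz) (hne z hz)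
  have hdQ : ∀ z ∈ ball (0:ℂ) 1, HasDerivAt (L2aux w) (deriv (L2aux w) z) z := dAt _ hQa
  -- derivative chains
  have H1 : ∀ z ∈ ball (0:ℂ) 1,
      HasDerivAt (fun y => y * deriv f y * (1 - Complex.log (1 + w y)) - f y)
        (deriv f z * (1 - Complex.log (1 + w z))
          + z * deriv (deriv f) z * (1 - Complex.log (1 + w z))
          - z * deriv f z * (deriv w z / (1 + w z)) - deriv f z) z := by
    intro z hz
    have h := (((hasDerivAt_id' z).mul (dAt _ hF1a z hz)).mul (hd1L z hz)).sub (dAt f hfa z hz)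
    refine h.congr_deriv ?_
    simp only [Pi.mul_apply]
    ring
  have E1 : ∀ z ∈ ball (0:ℂ) 1,
      deriv f z * (1 - Complex.log (1 + w z))
        + z * deriv (deriv f) z * (1 - Complex.log (1 + w z))
        - z * deriv f z * (deriv w z / (1 + w z)) - deriv f z = 0 := by
    intro z hz
    have hev : (fun y => y * deriv f y * (1 - Complex.log (1 + w y)) - f y)
        =ᶠ[nhds z] (fun _ => (0:ℂ)) :=
      Filter.eventuallyEq_of_mem (hop.mem_nhds hz) (fun y hy => sub_eq_zero_of_eq (heq y hy))
    calc _ = deriv (fun y => y * deriv f y * (1 - Complex.log (1 + w y)) - f y) z :=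
            ((H1 z hz).deriv).symm
      _ = deriv (fun _ => (0:ℂ)) z := hev.deriv_eq
      _ = 0 := deriv_const _ _
  have H2 : ∀ z ∈ ball (0:ℂ) 1,
      HasDerivAt (fun y => deriv f y * (1 - Complex.log (1 + w y))
          + y * deriv (deriv f) y * (1 - Complex.log (1 + w y))
          - y * deriv f y * (deriv w y / (1 + w y)) - deriv f y)
        (2 * deriv (deriv f) z * (1 - Complex.log (1 + w z))
          - 2 * deriv f z * (deriv w z / (1 + w z))
          + z * deriv (deriv (deriv f)) z * (1 - Complex.log (1 + w z))
          - 2 * z * deriv (deriv f) z * (deriv w z / (1 + w z))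
          - z * deriv f z * L2aux w z - deriv (deriv f) z) z := by
    intro z hz
    have p1 := (dAt _ hF1a z hz).mul (hd1L z hz)
    have p2 := ((hasDerivAt_id' z).mul (dAt _ hF2a z hz)).mul (hd1L z hz)
    have p3 := ((hasDerivAt_id' z).mul (dAt _ hF1a z hz)).mul (hdL1 z hz)
    have h := ((p1.add p2).sub p3).sub (dAt _ hF1a z hz)
    refine h.congr_deriv ?_
    simp only [Pi.mul_apply]
    ring
  have E2 : ∀ z ∈ ball (0:ℂ) 1,
      2 * deriv (deriv f) z * (1 - Complex.log (1 + w z))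
        - 2 * deriv f z * (deriv w z / (1 + w z))
        + z * deriv (deriv (deriv f)) z * (1 - Complex.log (1 + w z))
        - 2 * z * deriv (deriv f) z * (deriv w z / (1 + w z))
        - z * deriv f z * L2aux w z - deriv (deriv f) z = 0 := by
    intro z hz
    have hev : (fun y => deriv f y * (1 - Complex.log (1 + w y))
          + y * deriv (deriv f) y * (1 - Complex.log (1 + w y))
          - y * deriv f y * (deriv w y / (1 + w y)) - deriv f y)
        =ᶠ[nhds z] (fun _ => (0:ℂ)) :=
      Filter.eventuallyEq_of_mem (hop.mem_nhds hz) (fun y hy => E1 y hy)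
    calc _ = deriv (fun y => deriv f y * (1 - Complex.log (1 + w y))
          + y * deriv (deriv f) y * (1 - Complex.log (1 + w y))
          - y * deriv f y * (deriv w y / (1 + w y)) - deriv f y) z := ((H2 z hz).deriv).symm
      _ = deriv (fun _ => (0:ℂ)) z := hev.deriv_eq
      _ = 0 := deriv_const _ _
  have H3 : ∀ z ∈ ball (0:ℂ) 1,
      HasDerivAt (fun y => 2 * deriv (deriv f) y * (1 - Complex.log (1 + w y))
          - 2 * deriv f y * (deriv w y / (1 + w y))
          + y * deriv (deriv (deriv f)) y * (1 - Complex.log (1 + w y))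
          - 2 * y * deriv (deriv f) y * (deriv w y / (1 + w y))
          - y * deriv f y * L2aux w y - deriv (deriv f) y)
        (3 * deriv (deriv (deriv f)) z * (1 - Complex.log (1 + w z))
          - 6 * deriv (deriv f) z * (deriv w z / (1 + w z))
          - 3 * deriv f z * L2aux w z
          + z * deriv (deriv (deriv (deriv f))) z * (1 - Complex.log (1 + w z))
          - 3 * z * deriv (deriv (deriv f)) z * (deriv w z / (1 + w z))
          - 3 * z * deriv (deriv f) z * L2aux w z
          - z * deriv f z * deriv (L2aux w) z - deriv (deriv (deriv f)) z) z := by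
    intro z hz
    have p1 := ((hasDerivAt_const z (2:ℂ)).mul (dAt _ hF2a z hz)).mul (hd1L z hz)
    have p2 := ((hasDerivAt_const z (2:ℂ)).mul (dAt _ hF1a z hz)).mul (hdL1 z hz)
    have p3 := ((hasDerivAt_id' z).mul (dAt _ hF3a z hz)).mul (hd1L z hz)
    have p4 := (((hasDerivAt_const z (2:ℂ)).mul (hasDerivAt_id' z)).mul (dAt _ hF2a z hz)).mul (hdL1 z hz)
    have p5 := ((hasDerivAt_id' z).mul (dAt _ hF1a z hz)).mul (hdQ z hz)
    have h := ((((p1.sub p2).add p3).sub p4).sub p5).sub (dAt _ hF2a z hz)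
    refine h.congr_deriv ?_
    simp only [Pi.mul_apply]
    ring
  have E3 : ∀ z ∈ ball (0:ℂ) 1,
      3 * deriv (deriv (deriv f)) z * (1 - Complex.log (1 + w z))
        - 6 * deriv (deriv f) z * (deriv w z / (1 + w z))
        - 3 * deriv f z * L2aux w z
        + z * deriv (deriv (deriv (deriv f))) z * (1 - Complex.log (1 + w z))
        - 3 * z * deriv (deriv (deriv f)) z * (deriv w z / (1 + w z))
        - 3 * z * deriv (deriv f) z * L2aux w z
        - z * deriv f z * deriv (L2aux w) z - deriv (deriv (deriv f)) z = 0 := by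
    intro z hz
    have hev : (fun y => 2 * deriv (deriv f) y * (1 - Complex.log (1 + w y))
          - 2 * deriv f y * (deriv w y / (1 + w y))
          + y * deriv (deriv (deriv f)) y * (1 - Complex.log (1 + w y))
          - 2 * y * deriv (deriv f) y * (deriv w y / (1 + w y))
          - y * deriv f y * L2aux w y - deriv (deriv f) y)
        =ᶠ[nhds z] (fun _ => (0:ℂ)) :=
      Filter.eventuallyEq_of_mem (hop.mem_nhds hz) (fun y hy => E2 y hy)
    calc _ = deriv (fun y => 2 * deriv (deriv f) y * (1 - Complex.log (1 + w y))
          - 2 * deriv f y * (deriv w y / (1 + w y))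
          + y * deriv (deriv (deriv f)) y * (1 - Complex.log (1 + w y))
          - 2 * y * deriv (deriv f) y * (deriv w y / (1 + w y))
          - y * deriv f y * L2aux w y - deriv (deriv f) y) z := ((H3 z hz).deriv).symm
      _ = deriv (fun _ => (0:ℂ)) z := hev.deriv_eq
      _ = 0 := deriv_const _ _
  -- the fourth derivative at 0 only
  have H4 : HasDerivAt (fun y => 3 * deriv (deriv (deriv f)) y * (1 - Complex.log (1 + w y))
        - 6 * deriv (deriv f) y * (deriv w y / (1 + w y))
        - 3 * deriv f y * L2aux w y
        + y * deriv (deriv (deriv (deriv f))) y * (1 - Complex.log (1 + w y))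
        - 3 * y * deriv (deriv (deriv f)) y * (deriv w y / (1 + w y))
        - 3 * y * deriv (deriv f) y * L2aux w y
        - y * deriv f y * deriv (L2aux w) y - deriv (deriv (deriv f)) y)
      (3 * deriv (deriv (deriv (deriv f))) 0
        - 12 * deriv (deriv (deriv f)) 0 * deriv w 0
        - 12 * deriv (deriv f) 0 * (deriv (deriv w) 0 - deriv w 0 * deriv w 0)
        - 4 * (deriv (deriv (deriv w)) 0 - 3 * deriv w 0 * deriv (deriv w) 0
            + 2 * (deriv w 0) ^ 3)) 0 := by
    have hQ0 : L2aux w 0 = deriv (deriv w) 0 - deriv w 0 * deriv w 0 := by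
      simp [L2aux, hw0]
    have hdQ0 : deriv (L2aux w) 0 = deriv (deriv (deriv w)) 0
        - 3 * deriv w 0 * deriv (deriv w) 0 + 2 * (deriv w 0) ^ 3 := by
      have h := (((dAt _ hw2a 0 h0).mul (hdM 0 h0)).sub
          ((dAt _ hw1a 0 h0).mul (dAt _ hw1a 0 h0))).div
          ((hdM 0 h0).pow 2) (pow_ne_zero 2 (hne 0 h0))
      have h2 := (show HasDerivAt (L2aux w) _ 0 from h).deriv
      rw [h2, hw0]
      norm_num [hw0]
      ring
    have u1 := ((hasDerivAt_const 0 (3:ℂ)).mul (dAt _ hF3a 0 h0)).mul (hd1L 0 h0)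
    have u2 := ((hasDerivAt_const 0 (6:ℂ)).mul (dAt _ hF2a 0 h0)).mul (hdL1 0 h0)
    have u3 := ((hasDerivAt_const 0 (3:ℂ)).mul (dAt _ hF1a 0 h0)).mul (hdQ 0 h0)
    have u4 := ((hasDerivAt_id' 0).mul (dAt _ hF4a 0 h0)).mul (hd1L 0 h0)
    have u5 := (((hasDerivAt_const 0 (3:ℂ)).mul (hasDerivAt_id' 0)).mul (dAt _ hF3a 0 h0)).mul (hdL1 0 h0)
    have u6 := (((hasDerivAt_const 0 (3:ℂ)).mul (hasDerivAt_id' 0)).mul (dAt _ hF2a 0 h0)).mul (hdQ 0 h0)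
    have u7 := ((hasDerivAt_id' 0).mul (dAt _ hF1a 0 h0)).mul (dAt _ hQa' 0 h0)
    have h := ((((((u1.sub u2).sub u3).add u4).sub u5).sub u6).sub u7).sub (dAt _ hF3a 0 h0)
    refine h.congr_deriv ?_
    simp only [Pi.mul_apply]
    rw [hQ0, hdQ0, hw0, hf1]
    simp [Complex.log_one]
    ring
  have E4 : 3 * deriv (deriv (deriv (deriv f))) 0
        - 12 * deriv (deriv (deriv f)) 0 * deriv w 0
        - 12 * deriv (deriv f) 0 * (deriv (deriv w) 0 - deriv w 0 * deriv w 0)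
        - 4 * (deriv (deriv (deriv w)) 0 - 3 * deriv w 0 * deriv (deriv w) 0
            + 2 * (deriv w 0) ^ 3) = 0 := by
    have hev : (fun y => 3 * deriv (deriv (deriv f)) y * (1 - Complex.log (1 + w y))
          - 6 * deriv (deriv f) y * (deriv w y / (1 + w y))
          - 3 * deriv f y * L2aux w y
          + y * deriv (deriv (deriv (deriv f))) y * (1 - Complex.log (1 + w y))
          - 3 * y * deriv (deriv (deriv f)) y * (deriv w y / (1 + w y))
          - 3 * y * deriv (deriv f) y * L2aux w y
          - y * deriv f y * deriv (L2aux w) y - deriv (deriv (deriv f)) y)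
        =ᶠ[nhds 0] (fun _ => (0:ℂ)) :=
      Filter.eventuallyEq_of_mem (hop.mem_nhds h0) (fun y hy => E3 y hy)
    calc _ = deriv (fun y => 3 * deriv (deriv (deriv f)) y * (1 - Complex.log (1 + w y))
          - 6 * deriv (deriv f) y * (deriv w y / (1 + w y))
          - 3 * deriv f y * L2aux w y
          + y * deriv (deriv (deriv (deriv f))) y * (1 - Complex.log (1 + w y))
          - 3 * y * deriv (deriv (deriv f)) y * (deriv w y / (1 + w y))
          - 3 * y * deriv (deriv f) y * L2aux w y
          - y * deriv f y * deriv (L2aux w) y - deriv (deriv (deriv f)) y) 0 :=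
            (H4.deriv).symm
      _ = deriv (fun _ => (0:ℂ)) 0 := hev.deriv_eq
      _ = 0 := deriv_const _ _
  -- extract clean scalar equations
  have e2 : deriv (deriv f) 0 = 2 * deriv w 0 := by
    have h := E2 0 h0
    rw [hw0, hf1] at h
    simp [Complex.log_one] at h
    linear_combination h
  have e3 : deriv (deriv (deriv f)) 0 =
      (9/2) * (deriv w 0) ^ 2 + (3/2) * deriv (deriv w) 0 := by
    have h := E3 0 h0
    rw [hw0, hf1] at h
    simp [Complex.log_one, L2aux, hw0] at h
    linear_combination (1/2 : ℂ) * h + 3 * deriv w 0 * e2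
  have e4 : deriv (deriv (deriv (deriv f))) 0 =
      (38/3) * (deriv w 0) ^ 3 + 10 * deriv w 0 * deriv (deriv w) 0
        + (4/3) * deriv (deriv (deriv w)) 0 := by
    linear_combination (1/3 : ℂ) * E4 + 4 * deriv w 0 * e3
      + (4 * (deriv (deriv w) 0 - deriv w 0 * deriv w 0)) * e2
  -- convert to taylor coefficients
  have t2 : iteratedDeriv 2 f 0 = deriv (deriv f) 0 := by
    rw [iteratedDeriv_succ, iteratedDeriv_one]
  have t3 : iteratedDeriv 3 f 0 = deriv (deriv (deriv f)) 0 := by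
    rw [iteratedDeriv_succ, iteratedDeriv_succ, iteratedDeriv_one]
  have t4 : iteratedDeriv 4 f 0 = deriv (deriv (deriv (deriv f))) 0 := by
    rw [iteratedDeriv_succ, iteratedDeriv_succ, iteratedDeriv_succ, iteratedDeriv_one]
  have s1 : iteratedDeriv 1 w 0 = deriv w 0 := by rw [iteratedDeriv_one]
  have s2 : iteratedDeriv 2 w 0 = deriv (deriv w) 0 := by
    rw [iteratedDeriv_succ, iteratedDeriv_one]
  have s3 : iteratedDeriv 3 w 0 = deriv (deriv (deriv w)) 0 := by
    rw [iteratedDeriv_succ, iteratedDeriv_succ, iteratedDeriv_one]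
  refine ⟨?_, ?_, ?_⟩
  · simp only [taylorCoeff, t2, s1]
    rw [e2]
    norm_num [Nat.factorial]
  · simp only [taylorCoeff, t3, s1, s2]
    rw [e3]
    norm_num [Nat.factorial]
    ring
  · simp only [taylorCoeff, t4, s1, s2, s3]
    rw [e4]
    norm_num [Nat.factorial]
    ring
end

section
/- Let A, B, C be real numbers with A·C ≥ 0, and define Y(A,B,C) = max over z in the closed unit disk of (|A + B·z + C·z²| + 1 − |z|²). If |B| ≥ 2(1 − |C|), then Y(A,B,C) = |A| + |B| + |C|; if |B| < 2(1 − |C|), then Y(A,B,C) = 1 + |A| + B²/(4(1 − |C|)). -/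
open Complex Metric

lemma choi_attain (A B C : ℝ) (hAC : 0 ≤ A * C) (t : ℝ) (ht : 0 ≤ t) (ht1 : t ≤ 1) :
    (|A| + |B| * t + |C| * t ^ 2 + 1 - t ^ 2) ∈
      ((fun z : ℂ => ‖(A : ℂ) + (B : ℂ) * z + (C : ℂ) * z ^ 2‖ +
        1 - ‖z‖ ^ 2) '' closedBall (0:ℂ) 1) := by
  have hx : ∃ x : ℝ, |x| = t ∧ |A + B * x + C * x ^ 2| = |A| + |B| * t + |C| * t ^ 2 := by
    rcases mul_nonneg_iff.mp hAC with ⟨hA, hC⟩ | ⟨hA, hC⟩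
    · rcases le_or_gt 0 B with hB | hB
      · refine ⟨t, _root_.abs_of_nonneg ht, ?_⟩
        have h0 : (0:ℝ) ≤ A + B * t + C * t ^ 2 := by positivity
        rw [_root_.abs_of_nonneg h0, _root_.abs_of_nonneg hA, _root_.abs_of_nonneg hB, _root_.abs_of_nonneg hC]
      · refine ⟨-t, by rw [abs_neg, _root_.abs_of_nonneg ht], ?_⟩
        have h0 : (0:ℝ) ≤ A + B * (-t) + C * (-t) ^ 2 := by nlinarith
        rw [_root_.abs_of_nonneg h0, _root_.abs_of_nonneg hA, _root_.abs_of_neg hB, _root_.abs_of_nonneg hC]; ring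
    · rcases le_or_gt 0 B with hB | hB
      · refine ⟨-t, by rw [abs_neg, _root_.abs_of_nonneg ht], ?_⟩
        have h0 : A + B * (-t) + C * (-t) ^ 2 ≤ 0 := by nlinarith
        rw [_root_.abs_of_nonpos h0, _root_.abs_of_nonpos hA, _root_.abs_of_nonneg hB, _root_.abs_of_nonpos hC]; ring
      · refine ⟨t, _root_.abs_of_nonneg ht, ?_⟩
        have h0 : A + B * t + C * t ^ 2 ≤ 0 := by nlinarith
        rw [_root_.abs_of_nonpos h0, _root_.abs_of_nonpos hA, _root_.abs_of_neg hB, _root_.abs_of_nonpos hC]; ring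
  obtain ⟨x, hxt, hxval⟩ := hx
  refine ⟨(x : ℂ), ?_, ?_⟩
  · simpa [Metric.mem_closedBall, Complex.dist_eq, Complex.norm_real, Real.norm_eq_abs, hxt] using ht1
  · have h1 : (A : ℂ) + (B : ℂ) * (x:ℂ) + (C : ℂ) * (x:ℂ) ^ 2
        = ((A + B * x + C * x ^ 2 : ℝ) : ℂ) := by push_cast; ring
    simp only [h1, Complex.norm_real, Real.norm_eq_abs, hxt, hxval]

lemma choi_ub (A B C : ℝ) (z : ℂ) (hz : z ∈ closedBall (0:ℂ) 1) :
    ∃ r : ℝ, 0 ≤ r ∧ r ≤ 1 ∧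
      ‖(A : ℂ) + (B : ℂ) * z + (C : ℂ) * z ^ 2‖ + 1 - ‖z‖ ^ 2
        ≤ |A| + |B| * r + |C| * r ^ 2 + 1 - r ^ 2 := by
  refine ⟨‖z‖, norm_nonneg z, ?_, ?_⟩
  · simpa [Metric.mem_closedBall, Complex.dist_eq] using hz
  · have h1 : ‖(A : ℂ) + (B : ℂ) * z + (C : ℂ) * z ^ 2‖
        ≤ |A| + |B| * ‖z‖ + |C| * ‖z‖ ^ 2 := by
      calc ‖(A : ℂ) + (B : ℂ) * z + (C : ℂ) * z ^ 2‖
          ≤ ‖(A : ℂ) + (B : ℂ) * z‖ + ‖(C : ℂ) * z ^ 2‖ :=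
            norm_add_le _ _
        _ ≤ ‖(A : ℂ)‖ + ‖(B : ℂ) * z‖ + ‖(C : ℂ) * z ^ 2‖ := by
            have := norm_add_le (A : ℂ) ((B : ℂ) * z); linarith
        _ = |A| + |B| * ‖z‖ + |C| * ‖z‖ ^ 2 := by
            simp [norm_mul, norm_pow, Complex.norm_real]
    linarith

theorem choi_kim_sugawa_Y (A B C Y : ℝ) (hAC : 0 ≤ A * C)
    (hY : IsGreatest
      ((fun z : ℂ => ‖(A : ℂ) + (B : ℂ) * z + (C : ℂ) * z ^ 2‖ +
        1 - ‖z‖ ^ 2) '' closedBall (0:ℂ) 1) Y) :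
    (|B| ≥ 2 * (1 - |C|) → Y = |A| + |B| + |C|) ∧
    (|B| < 2 * (1 - |C|) → Y = 1 + |A| + B ^ 2 / (4 * (1 - |C|))) := by
  constructor
  · intro hB
    apply le_antisymm
    · obtain ⟨z, hz, hzY⟩ := hY.1
      obtain ⟨r, hr0, hr1, hle⟩ := choi_ub A B C z hz
      have key : |A| + |B| * r + |C| * r ^ 2 + 1 - r ^ 2 ≤ |A| + |B| + |C| := by
        rcases le_or_gt (|C|) 1 with hC | hC
        · nlinarith [mul_nonneg (sub_nonneg.2 hr1) (sub_nonneg.2 hB),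
            mul_nonneg (sub_nonneg.2 hC) (sq_nonneg (1 - r))]
        · nlinarith [mul_nonneg (abs_nonneg B) (sub_nonneg.2 hr1),
            mul_nonneg (le_of_lt (sub_pos.2 hC))
              (mul_nonneg (sub_nonneg.2 hr1) (by linarith : (0:ℝ) ≤ 1 + r))]
      calc Y = _ := hzY.symm
        _ ≤ |A| + |B| + |C| := le_trans hle key
    · have hmem := choi_attain A B C hAC 1 zero_le_one le_rfl
      have := hY.2 hmem
      linarith
  · intro hB
    have hD : 0 < 1 - |C| := by
      have := abs_nonneg B; linarith
    set t : ℝ := |B| / (2 * (1 - |C|)) with htdef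
    have ht0 : 0 ≤ t := by positivity
    have ht1 : t ≤ 1 := by
      rw [htdef, div_le_one (by linarith)]; linarith
    have hval : |A| + |B| * t + |C| * t ^ 2 + 1 - t ^ 2
        = 1 + |A| + B ^ 2 / (4 * (1 - |C|)) := by
      rw [← _root_.sq_abs B, htdef]
      field_simp
      ring
    apply le_antisymm
    · obtain ⟨z, hz, hzY⟩ := hY.1
      obtain ⟨r, hr0, hr1, hle⟩ := choi_ub A B C z hz
      have hkey : |B| * r - (1 - |C|) * r ^ 2 ≤ B ^ 2 / (4 * (1 - |C|)) := by
        rw [← _root_.sq_abs B, le_div_iff₀ (by linarith)]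
        nlinarith [sq_nonneg (|B| - 2 * (1 - |C|) * r)]
      calc Y = _ := hzY.symm
        _ ≤ |A| + |B| * r + |C| * r ^ 2 + 1 - r ^ 2 := hle
        _ ≤ 1 + |A| + B ^ 2 / (4 * (1 - |C|)) := by nlinarith
    · have hmem := choi_attain A B C hAC t ht0 ht1
      have := hY.2 hmem
      linarith
end
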